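/- Let f be m-strongly convex and differentiable with minimizer x*. Fix λ > 0 and a point z, and let w be the unique minimizer of ψ(x) = f(x) + (λ/2)‖x - z‖². Then f(w) - f(x*) ≤ (λ/(m+λ))(f(z) - f(x*)). -/

import Mathlib

open scoped InnerProductSpace

theorem stmt_4 {n : ℕ} (f : EuclideanSpace ℝ (Fin n) → ℝ) (m lam : ℝ)
    (hm : 0 < m) (hlam : 0 < lam)
    (hdiff : Differentiable ℝ f)
    (hconv : ∀ x y, f x + ⟪gradient f x, y - x⟫_ℝ + m / 2 * ‖y - x‖ ^ 2 ≤ f y)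
    (xstar z w : EuclideanSpace ℝ (Fin n))
    (hmin : ∀ x, f xstar ≤ f x)
    (hw : ∀ x, f w + lam / 2 * ‖w - z‖ ^ 2 ≤ f x + lam / 2 * ‖x - z‖ ^ 2) :
    f w - f xstar ≤ lam / (m + lam) * (f z - f xstar) := by
  have hml : 0 < m + lam := by linarith
  set t : ℝ := m / (m + lam) with ht
  have ht0 : 0 < t := div_pos hm hml
  have ht1 : t < 1 := by rw [ht, div_lt_one hml]; linarith
  set d := xstar - z with hd
  set xt := z + t • d with hxt
  have e1 : xstar - xt = (1 - t) • d := by rw [hxt, hd]; module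
  have e2 : z - xt = (-t) • d := by rw [hxt]; module
  have e3 : xt - z = t • d := by rw [hxt]; module
  have h1 := hconv xt xstar
  have h2 := hconv xt z
  have h3 := hw xt
  rw [e1] at h1
  rw [e2] at h2
  rw [e3] at h3
  rw [real_inner_smul_right] at h1 h2
  rw [norm_smul, Real.norm_eq_abs, abs_of_nonneg (by linarith : (0:ℝ) ≤ 1 - t)] at h1
  rw [norm_smul, Real.norm_eq_abs, abs_of_nonpos (by linarith : (-t:ℝ) ≤ 0)] at h2
  rw [norm_smul, Real.norm_eq_abs, abs_of_nonneg ht0.le] at h3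
  have hkey : lam * t = m * (1 - t) := by
    rw [ht]; field_simp; ring
  have hgoal : lam / (m + lam) = 1 - t := by
    rw [ht]; field_simp; ring
  rw [hgoal]
  have hnn : 0 ≤ ‖w - z‖ ^ 2 := sq_nonneg _
  have hdnn : 0 ≤ ‖d‖ ^ 2 := sq_nonneg _
  nlinarith [mul_le_mul_of_nonneg_left h1 ht0.le,
    mul_le_mul_of_nonneg_left h2 (by linarith : (0:ℝ) ≤ 1 - t),
    h3, mul_nonneg ht0.le hdnn, mul_nonneg hlam.le hnn,
    mul_nonneg (mul_nonneg ht0.le (by linarith : (0:ℝ) ≤ 1 - t)) hdnn]
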